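/- For every real θ, n ≥ 1, 1 ≤ p ≤ n and 0 ≤ j ≤ p, the coefficients f^n_{p,j}(θ) defined by the expansion (e^θ D + E)^n = ∑_{p=1}^n ∑_{j=0}^p f^n_{p,j}(θ) E^{p-j} D^j (with the recursion from the relation DE = D + E) satisfy the symmetry f^n_{p,j}(θ) = e^{nθ} f^n_{p,p-j}(-θ). -/

import Mathlib

open Finset

private lemma sshift (a b : ℕ) (ha : 1 ≤ a) (F : ℕ → ℝ) :
    ∑ k ∈ Icc a (b+1), F (k-1) = ∑ k ∈ Icc (a-1) b, F k := by
  apply Finset.sum_nbij' (i := fun k => k - 1) (j := fun k => k + 1) <;>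
    (intros; simp_all [mem_Icc]) <;> omega

private lemma sreflect (a b : ℕ) (F : ℕ → ℝ) :
    ∑ k ∈ Icc a b, F k = ∑ k ∈ Icc a b, F (a + b - k) := by
  apply Finset.sum_nbij' (i := fun k => a + b - k) (j := fun k => a + b - k) <;>
    (intros; simp_all [mem_Icc]) <;> first | omega | (congr 1; omega)

private lemma sswap (p m M : ℕ) (hM : m ≤ M) (F : ℕ → ℕ → ℝ) :
    ∑ k ∈ Icc p M, ∑ l ∈ Icc k m, F k l = ∑ l ∈ Icc p m, ∑ k ∈ Icc p l, F k l := by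
  have h1 : ∀ k ∈ Icc p M, ∑ l ∈ Icc k m, F k l = ∑ l ∈ Icc p m, if k ≤ l then F k l else 0 := by
    intro k hk
    simp only [mem_Icc] at hk
    rw [← Finset.sum_filter]
    congr 1
    ext l
    simp only [mem_filter, mem_Icc]
    omega
  rw [Finset.sum_congr rfl h1, Finset.sum_comm]
  refine Finset.sum_congr rfl fun l hl => ?_
  simp only [mem_Icc] at hl
  rw [← Finset.sum_filter]
  congr 1
  ext k
  simp only [mem_filter, mem_Icc]
  omega

private lemma skey (p q m : ℕ) (u : ℕ → ℕ → ℝ) :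
    ∑ k ∈ Icc p (m+1), ∑ l ∈ Icc k m, u l (l-k+q)
      = ∑ k ∈ Icc p (m+1), ∑ l ∈ Icc k m, u l (k-p+q) := by
  rw [sswap p m (m+1) (by omega), sswap p m (m+1) (by omega)]
  refine Finset.sum_congr rfl fun l hl => ?_
  simp only [mem_Icc] at hl
  rw [sreflect p l]
  refine Finset.sum_congr rfl fun k hk => ?_
  simp only [mem_Icc] at hk
  congr 1
  omega

private def Rop (t : ℝ) (m : ℕ) (u : ℕ → ℕ → ℝ) (p j : ℕ) : ℝ :=
  if p = 0 then 0
  else if j = 0 then u (p-1) 0 + ∑ k ∈ Finset.Icc p m, u k (k - p + 1)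
  else t * u (p-1) (j-1) + ∑ k ∈ Finset.Icc p m, u k (k - p + j)

private def Lop (t : ℝ) (m : ℕ) (u : ℕ → ℕ → ℝ) (p j : ℕ) : ℝ :=
  if p = 0 then 0
  else if j < p then u (p-1) j + t * ∑ k ∈ Finset.Icc p m, u k j
  else t * u (p-1) (p-1) + t * ∑ k ∈ Finset.Icc p m, u k (p-1)

private lemma Rop_zero (t : ℝ) (m : ℕ) (u : ℕ → ℕ → ℝ) (j : ℕ) : Rop t m u 0 j = 0 := by
  unfold Rop; rw [if_pos rfl]

private lemma Lop_zero (t : ℝ) (m : ℕ) (u : ℕ → ℕ → ℝ) (j : ℕ) : Lop t m u 0 j = 0 := by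
  unfold Lop; rw [if_pos rfl]

private lemma Rop_j0 (t : ℝ) (m : ℕ) (u : ℕ → ℕ → ℝ) (p : ℕ) (hp : 1 ≤ p) :
    Rop t m u p 0 = u (p-1) 0 + ∑ k ∈ Finset.Icc p m, u k (k - p + 1) := by
  unfold Rop; rw [if_neg (by omega), if_pos rfl]

private lemma Rop_pos (t : ℝ) (m : ℕ) (u : ℕ → ℕ → ℝ) (p j : ℕ) (hp : 1 ≤ p) (hj : 1 ≤ j) :
    Rop t m u p j = t * u (p-1) (j-1) + ∑ k ∈ Finset.Icc p m, u k (k - p + j) := by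
  unfold Rop; rw [if_neg (by omega), if_neg (by omega)]

private lemma Lop_lt (t : ℝ) (m : ℕ) (u : ℕ → ℕ → ℝ) (p j : ℕ) (hj : j < p) :
    Lop t m u p j = u (p-1) j + t * ∑ k ∈ Finset.Icc p m, u k j := by
  unfold Lop; rw [if_neg (by omega), if_pos hj]

private lemma Lop_eq (t : ℝ) (m : ℕ) (u : ℕ → ℕ → ℝ) (p : ℕ) (hp : 1 ≤ p) :
    Lop t m u p p = t * u (p-1) (p-1) + t * ∑ k ∈ Finset.Icc p m, u k (p-1) := by
  unfold Lop; rw [if_neg (by omega), if_neg (lt_irrefl p)]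

private lemma Rop_congr (t : ℝ) (m : ℕ) (u v : ℕ → ℕ → ℝ) (p j : ℕ)
    (hpm : p ≤ m + 1) (hj : j ≤ p)
    (h : ∀ a b, a ≤ m → b ≤ a → u a b = v a b) :
    Rop t m u p j = Rop t m v p j := by
  unfold Rop
  by_cases hp : p = 0
  · rw [if_pos hp, if_pos hp]
  · rw [if_neg hp, if_neg hp]
    have hs : ∀ q : ℕ, (∀ k ∈ Icc p m, q ≤ p → True) → True := fun _ _ => trivial
    by_cases hj0 : j = 0
    · rw [if_pos hj0, if_pos hj0, h (p-1) 0 (by omega) (by omega)]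
      congr 1
      refine Finset.sum_congr rfl fun k hk => ?_
      simp only [mem_Icc] at hk
      exact h k (k - p + 1) hk.2 (by omega)
    · rw [if_neg hj0, if_neg hj0, h (p-1) (j-1) (by omega) (by omega)]
      congr 1
      refine Finset.sum_congr rfl fun k hk => ?_
      simp only [mem_Icc] at hk
      exact h k (k - p + j) hk.2 (by omega)

private lemma Lop_congr (t : ℝ) (m : ℕ) (u v : ℕ → ℕ → ℝ) (p j : ℕ)
    (hpm : p ≤ m + 1) (hj : j ≤ p)
    (h : ∀ a b, a ≤ m → b ≤ a → u a b = v a b) :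
    Lop t m u p j = Lop t m v p j := by
  unfold Lop
  by_cases hp : p = 0
  · rw [if_pos hp, if_pos hp]
  · rw [if_neg hp, if_neg hp]
    by_cases hjp : j < p
    · rw [if_pos hjp, if_pos hjp, h (p-1) j (by omega) (by omega)]
      congr 2
      refine Finset.sum_congr rfl fun k hk => ?_
      simp only [mem_Icc] at hk
      exact h k j hk.2 (by omega)
    · rw [if_neg hjp, if_neg hjp, h (p-1) (p-1) (by omega) (by omega)]
      congr 2
      refine Finset.sum_congr rfl fun k hk => ?_
      simp only [mem_Icc] at hk
      exact h k (p-1) hk.2 (by omega)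


private lemma stmt8_comm (t : ℝ) (m : ℕ) (u : ℕ → ℕ → ℝ) (p j : ℕ) (hp : 1 ≤ p) (hj : j ≤ p) :
    Lop t (m+1) (Rop t m u) p j = Rop t (m+1) (Lop t m u) p j := by
  by_cases hp1 : p = 1
  · subst hp1
    have core : t * ∑ k ∈ Icc 1 (m+1), Rop t m u k 0
        = ∑ k ∈ Icc 1 (m+1), Lop t m u k k := by
      have e1 : ∀ k ∈ Icc 1 (m+1), Rop t m u k 0
          = u (k-1) 0 + ∑ l ∈ Icc k m, u l (l-k+1) := by
        intro k hk; simp only [mem_Icc] at hk; exact Rop_j0 t m u k hk.1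
      have e2 : ∀ k ∈ Icc 1 (m+1), Lop t m u k k
          = t * u (k-1) (k-1) + t * ∑ l ∈ Icc k m, u l (k-1) := by
        intro k hk; simp only [mem_Icc] at hk; exact Lop_eq t m u k hk.1
      rw [Finset.sum_congr rfl e1, Finset.sum_congr rfl e2,
        Finset.sum_add_distrib, Finset.sum_add_distrib, ← Finset.mul_sum, ← Finset.mul_sum,
        mul_add, ← mul_add, ← mul_add]
      congr 1
      have s1 : ∑ k ∈ Icc 1 (m+1), u (k-1) 0 = ∑ k ∈ Icc 0 m, u k 0 := by
        simpa using sshift 1 m le_rfl (fun x => u x 0)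
      have s3 : ∑ k ∈ Icc 1 (m+1), u (k-1) (k-1) = ∑ k ∈ Icc 0 m, u k k := by
        simpa using sshift 1 m le_rfl (fun x => u x x)
      have s2 : ∑ k ∈ Icc 1 (m+1), ∑ l ∈ Icc k m, u l (l-k+1)
          = ∑ l ∈ Icc 1 m, ∑ k ∈ Icc 1 l, u l k := by
        rw [sswap 1 m (m+1) (by omega)]
        refine Finset.sum_congr rfl fun l hl => ?_
        simp only [mem_Icc] at hl
        rw [sreflect 1 l]
        refine Finset.sum_congr rfl fun k hk => ?_
        simp only [mem_Icc] at hk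
        congr 1; omega
      have s4 : ∑ k ∈ Icc 1 (m+1), ∑ l ∈ Icc k m, u l (k-1)
          = ∑ l ∈ Icc 1 m, ∑ k ∈ Icc 0 (l-1), u l k := by
        rw [sswap 1 m (m+1) (by omega)]
        refine Finset.sum_congr rfl fun l hl => ?_
        simp only [mem_Icc] at hl
        have hone : Icc 1 l = Icc 1 ((l-1)+1) := by congr 1; omega
        rw [hone]
        simpa using sshift 1 (l-1) le_rfl (fun x => u l x)
      rw [s1, s2, s3, s4]
      have i0 : Icc 0 m = insert 0 (Icc 1 m) := by ext x; simp [mem_Icc]; omega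
      rw [i0, Finset.sum_insert (by simp), Finset.sum_insert (by simp),
        add_assoc, add_assoc]
      congr 1
      rw [← Finset.sum_add_distrib, ← Finset.sum_add_distrib]
      refine Finset.sum_congr rfl fun l hl => ?_
      simp only [mem_Icc] at hl
      have j1 : Icc 0 l = insert 0 (Icc 1 l) := by ext x; simp [mem_Icc]; omega
      have j2 : Icc 0 l = insert l (Icc 0 (l-1)) := by ext x; simp [mem_Icc]; omega
      have n2 : l ∉ Icc 0 (l-1) := by simp [mem_Icc]; omega
      calc u l 0 + ∑ k ∈ Icc 1 l, u l k = ∑ k ∈ Icc 0 l, u l k := by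
            rw [j1, Finset.sum_insert (by simp)]
        _ = u l l + ∑ k ∈ Icc 0 (l-1), u l k := by rw [j2, Finset.sum_insert n2]
    interval_cases j
    · rw [Lop_lt t (m+1) _ 1 0 (by omega), Rop_j0 t (m+1) _ 1 le_rfl,
        Rop_zero, Lop_zero, zero_add, zero_add]
      have ee : ∀ k ∈ Icc 1 (m+1), Lop t m u k (k-1+1) = Lop t m u k k := by
        intro k hk; simp only [mem_Icc] at hk; congr 1; omega
      rw [Finset.sum_congr rfl ee]
      exact core
    · rw [Lop_eq t (m+1) _ 1 le_rfl, Rop_pos t (m+1) _ 1 1 le_rfl le_rfl]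
      simp only [Nat.sub_self, Rop_zero, Lop_zero, mul_zero, zero_add]
      have ee : ∀ k ∈ Icc 1 (m+1), Lop t m u k (k-1+1) = Lop t m u k k := by
        intro k hk; simp only [mem_Icc] at hk; congr 1; omega
      rw [Finset.sum_congr rfl ee]
      exact core
  · have hp2 : 2 ≤ p := by omega
    rcases Nat.lt_or_ge j p with hjp | hjp
    · -- j < p
      rcases Nat.eq_zero_or_pos j with hj0 | hj1
      · -- j = 0
        subst hj0
        rw [Lop_lt t (m+1) _ p 0 (by omega), Rop_j0 t (m+1) _ p hp]
        have hA1 : Rop t m u (p-1) 0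
            = u (p-1-1) 0 + ∑ l ∈ Icc (p-1) m, u l (l-(p-1)+1) :=
          Rop_j0 t m u (p-1) (by omega)
        have hB1 : Lop t m u (p-1) 0
            = u (p-1-1) 0 + t * ∑ k ∈ Icc (p-1) m, u k 0 :=
          Lop_lt t m u (p-1) 0 (by omega)
        have hA2 : ∀ k ∈ Icc p (m+1), Rop t m u k 0
            = u (k-1) 0 + ∑ l ∈ Icc k m, u l (l-k+1) := by
          intro k hk; simp only [mem_Icc] at hk; exact Rop_j0 t m u k (by omega)
        have hB2 : ∀ k ∈ Icc p (m+1), Lop t m u k (k-p+1)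
            = u (k-1) (k-p+1) + t * ∑ l ∈ Icc k m, u l (k-p+1) := by
          intro k hk; simp only [mem_Icc] at hk
          exact Lop_lt t m u k (k-p+1) (by omega)
        have s1 : ∑ k ∈ Icc p (m+1), u (k-1) 0 = ∑ k ∈ Icc (p-1) m, u k 0 := by
          simpa using sshift p m hp (fun x => u x 0)
        have s2 : ∑ k ∈ Icc p (m+1), u (k-1) (k-p+1)
            = ∑ k ∈ Icc (p-1) m, u k (k-(p-1)+1) := by
          rw [Finset.sum_congr rfl (fun k hk => ?_)]
          · exact (by simpa using sshift p m hp (fun x => u x (x-(p-1)+1)) :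
              ∑ k ∈ Icc p (m+1), u (k-1) ((k-1)-(p-1)+1) = ∑ k ∈ Icc (p-1) m, u k (k-(p-1)+1))
          · simp only [mem_Icc] at hk
            show u (k-1) (k-p+1) = u (k-1) ((k-1)-(p-1)+1)
            congr 1; omega
        have s3 : ∑ k ∈ Icc p (m+1), ∑ l ∈ Icc k m, u l (l-k+1)
            = ∑ k ∈ Icc p (m+1), ∑ l ∈ Icc k m, u l (k-p+1) := skey p 1 m u
        have SA : ∑ k ∈ Icc p (m+1), Rop t m u k 0
            = ∑ k ∈ Icc (p-1) m, u k 0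
              + ∑ k ∈ Icc p (m+1), ∑ l ∈ Icc k m, u l (k-p+1) := by
          rw [Finset.sum_congr rfl hA2, Finset.sum_add_distrib, s1, s3]
        have SB : ∑ k ∈ Icc p (m+1), Lop t m u k (k-p+1)
            = ∑ k ∈ Icc (p-1) m, u k (k-(p-1)+1)
              + t * ∑ k ∈ Icc p (m+1), ∑ l ∈ Icc k m, u l (k-p+1) := by
          rw [Finset.sum_congr rfl hB2, Finset.sum_add_distrib, ← Finset.mul_sum, s2]
        rw [hA1, hB1, SA, SB]
        ring
      · -- 0 < j < p
        rw [Lop_lt t (m+1) _ p j hjp, Rop_pos t (m+1) _ p j hp (by omega)]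
        have hA1 : Rop t m u (p-1) j
            = t * u (p-1-1) (j-1) + ∑ l ∈ Icc (p-1) m, u l (l-(p-1)+j) :=
          Rop_pos t m u (p-1) j (by omega) (by omega)
        have hB1 : Lop t m u (p-1) (j-1)
            = u (p-1-1) (j-1) + t * ∑ k ∈ Icc (p-1) m, u k (j-1) :=
          Lop_lt t m u (p-1) (j-1) (by omega)
        have hA2 : ∀ k ∈ Icc p (m+1), Rop t m u k j
            = t * u (k-1) (j-1) + ∑ l ∈ Icc k m, u l (l-k+j) := by
          intro k hk; simp only [mem_Icc] at hk
          exact Rop_pos t m u k j (by omega) (by omega)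
        have hB2 : ∀ k ∈ Icc p (m+1), Lop t m u k (k-p+j)
            = u (k-1) (k-p+j) + t * ∑ l ∈ Icc k m, u l (k-p+j) := by
          intro k hk; simp only [mem_Icc] at hk
          exact Lop_lt t m u k (k-p+j) (by omega)
        have s1 : ∑ k ∈ Icc p (m+1), u (k-1) (j-1) = ∑ k ∈ Icc (p-1) m, u k (j-1) := by
          simpa using sshift p m hp (fun x => u x (j-1))
        have s2 : ∑ k ∈ Icc p (m+1), u (k-1) (k-p+j)
            = ∑ k ∈ Icc (p-1) m, u k (k-(p-1)+j) := by
          rw [Finset.sum_congr rfl (fun k hk => ?_)]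
          · exact (by simpa using sshift p m hp (fun x => u x (x-(p-1)+j)) :
              ∑ k ∈ Icc p (m+1), u (k-1) ((k-1)-(p-1)+j) = ∑ k ∈ Icc (p-1) m, u k (k-(p-1)+j))
          · simp only [mem_Icc] at hk
            show u (k-1) (k-p+j) = u (k-1) ((k-1)-(p-1)+j)
            congr 1; omega
        have s3 : ∑ k ∈ Icc p (m+1), ∑ l ∈ Icc k m, u l (l-k+j)
            = ∑ k ∈ Icc p (m+1), ∑ l ∈ Icc k m, u l (k-p+j) := skey p j m u
        have SA : ∑ k ∈ Icc p (m+1), Rop t m u k j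
            = t * ∑ k ∈ Icc (p-1) m, u k (j-1)
              + ∑ k ∈ Icc p (m+1), ∑ l ∈ Icc k m, u l (k-p+j) := by
          rw [Finset.sum_congr rfl hA2, Finset.sum_add_distrib, ← Finset.mul_sum, s1, s3]
        have SB : ∑ k ∈ Icc p (m+1), Lop t m u k (k-p+j)
            = ∑ k ∈ Icc (p-1) m, u k (k-(p-1)+j)
              + t * ∑ k ∈ Icc p (m+1), ∑ l ∈ Icc k m, u l (k-p+j) := by
          rw [Finset.sum_congr rfl hB2, Finset.sum_add_distrib, ← Finset.mul_sum, s2]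
        rw [hA1, hB1, SA, SB]
        ring
    · -- j = p
      have hjeq : j = p := le_antisymm hj hjp
      subst hjeq
      rw [Lop_eq t (m+1) _ j hp, Rop_pos t (m+1) _ j j hp (by omega)]
      have hA1 : Rop t m u (j-1) (j-1)
          = t * u (j-1-1) (j-1-1) + ∑ l ∈ Icc (j-1) m, u l l := by
        rw [Rop_pos t m u (j-1) (j-1) (by omega) (by omega)]
        congr 1
        refine Finset.sum_congr rfl fun l hl => ?_
        simp only [mem_Icc] at hl; congr 1; omega
      have hB1 : Lop t m u (j-1) (j-1)
          = t * u (j-1-1) (j-1-1) + t * ∑ k ∈ Icc (j-1) m, u k (j-1-1) :=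
        Lop_eq t m u (j-1) (by omega)
      have hA2 : ∀ k ∈ Icc j (m+1), Rop t m u k (j-1)
          = t * u (k-1) (j-1-1) + ∑ l ∈ Icc k m, u l (l-k+(j-1)) := by
        intro k hk; simp only [mem_Icc] at hk
        exact Rop_pos t m u k (j-1) (by omega) (by omega)
      have hB2 : ∀ k ∈ Icc j (m+1), Lop t m u k (k-j+j)
          = t * u (k-1) (k-1) + t * ∑ l ∈ Icc k m, u l (k-1) := by
        intro k hk; simp only [mem_Icc] at hk
        have hkk : k - j + j = k := by omega
        rw [hkk]
        exact Lop_eq t m u k (by omega)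
      have s1 : ∑ k ∈ Icc j (m+1), u (k-1) (j-1-1) = ∑ k ∈ Icc (j-1) m, u k (j-1-1) := by
        simpa using sshift j m hp (fun x => u x (j-1-1))
      have s2 : ∑ k ∈ Icc j (m+1), u (k-1) (k-1) = ∑ k ∈ Icc (j-1) m, u k k := by
        simpa using sshift j m hp (fun x => u x x)
      have s3 : ∑ k ∈ Icc j (m+1), ∑ l ∈ Icc k m, u l (l-k+(j-1))
          = ∑ k ∈ Icc j (m+1), ∑ l ∈ Icc k m, u l (k-1) := by
        rw [skey j (j-1) m u]
        refine Finset.sum_congr rfl fun k hk => ?_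
        refine Finset.sum_congr rfl fun l hl => ?_
        simp only [mem_Icc] at hk hl
        congr 1; omega
      have SA : ∑ k ∈ Icc j (m+1), Rop t m u k (j-1)
          = t * ∑ k ∈ Icc (j-1) m, u k (j-1-1)
            + ∑ k ∈ Icc j (m+1), ∑ l ∈ Icc k m, u l (k-1) := by
        rw [Finset.sum_congr rfl hA2, Finset.sum_add_distrib, ← Finset.mul_sum, s1, s3]
      have SB : ∑ k ∈ Icc j (m+1), Lop t m u k (k-j+j)
          = t * ∑ k ∈ Icc (j-1) m, u k k
            + t * ∑ k ∈ Icc j (m+1), ∑ l ∈ Icc k m, u l (k-1) := by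
        rw [Finset.sum_congr rfl hB2, Finset.sum_add_distrib, ← Finset.mul_sum, ← Finset.mul_sum, s2]
      rw [hA1, hB1, SA, SB]
      ring

/-- `f n p j θ` are the coefficients of `E^(p-j) D^j` in the normal-order expansion of
`(e^θ D + E)^n` over the algebra with `DE = D + E`, defined via the recursion obtained
by right-multiplication by `(e^θ D + E)`. -/
theorem stmt_8
    (f : ℕ → ℕ → ℕ → ℝ → ℝ)
    (h10 : ∀ θ, f 1 1 0 θ = 1)
    (h11 : ∀ θ, f 1 1 1 θ = Real.exp θ)
    (hp1 : ∀ n θ, 1 < n → ∀ j ≤ 1,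
        f n 1 j θ = ∑ k ∈ Finset.Icc 1 (n - 1), f (n - 1) k k θ)
    (hj0 : ∀ n p θ, 1 < n → 1 < p → p < n →
        f n p 0 θ = f (n - 1) (p - 1) 0 θ + ∑ k ∈ Finset.Icc p (n - 1), f (n - 1) k (k - p + 1) θ)
    (hjpos : ∀ n p j θ, 1 < n → 0 < j → j ≤ p → p < n →
        f n p j θ = Real.exp θ * f (n - 1) (p - 1) (j - 1) θ
          + ∑ k ∈ Finset.Icc p (n - 1), f (n - 1) k (k - p + j) θ)
    (hn0 : ∀ n θ, 1 < n → f n n 0 θ = f (n - 1) (n - 1) 0 θ)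
    (hnj : ∀ n j θ, 1 < n → 0 < j → j ≤ n →
        f n n j θ = Real.exp θ * f (n - 1) (n - 1) (j - 1) θ) :
    ∀ n p j : ℕ, ∀ θ : ℝ, 1 ≤ n → 1 ≤ p → p ≤ n → j ≤ p →
      f n p j θ = Real.exp (n * θ) * f n p (p - j) (-θ) := by
  -- f vanishes at (0,0)
  have Z : ∀ m : ℕ, ∀ θ : ℝ, 1 ≤ m → f m 0 0 θ = 0 := by
    intro m θ hm
    have h1 := hp1 (m+1) θ (by omega) 1 le_rfl
    have h2 := hjpos (m+1) 1 1 θ (by omega) one_pos le_rfl (by omega)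
    simp only [Nat.add_sub_cancel] at h1 h2
    have hs : ∑ k ∈ Icc 1 m, f m k (k-1+1) θ = ∑ k ∈ Icc 1 m, f m k k θ := by
      refine Finset.sum_congr rfl fun k hk => ?_
      simp only [mem_Icc] at hk; congr 1; omega
    rw [h1, hs] at h2
    have h3 : Real.exp θ * f m 0 0 θ = 0 := by linarith
    exact (mul_eq_zero.mp h3).resolve_left (Real.exp_ne_zero θ)
  -- the right recursion, uniformly
  have Req : ∀ n : ℕ, ∀ θ : ℝ, 2 ≤ n → ∀ p j, 1 ≤ p → p ≤ n → j ≤ p →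
      f n p j θ = Rop (Real.exp θ) (n-1) (fun a b => f (n-1) a b θ) p j := by
    intro n θ hn p j hpge hpn hjp
    by_cases hj' : j = 0
    · subst hj'
      rw [Rop_j0 _ _ _ _ hpge]
      by_cases hpe : p = n
      · subst hpe
        rw [hn0 p θ (by omega), Finset.Icc_eq_empty (by omega), Finset.sum_empty, add_zero]
      · by_cases hpone : p = 1
        · subst hpone
          rw [hp1 n θ (by omega) 0 (by omega), Z (n-1) θ (by omega), zero_add]
          refine Finset.sum_congr rfl fun k hk => ?_
          simp only [mem_Icc] at hk; congr 1; omega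
        · exact hj0 n p θ (by omega) (by omega) (by omega)
    · rw [Rop_pos _ _ _ _ _ hpge (by omega)]
      by_cases hpe : p = n
      · subst hpe
        rw [hnj p j θ (by omega) (by omega) hjp, Finset.Icc_eq_empty (by omega),
          Finset.sum_empty, add_zero]
      · exact hjpos n p j θ (by omega) (by omega) hjp (by omega)
  -- the left recursion
  have Leq : ∀ n : ℕ, 2 ≤ n → ∀ θ : ℝ, ∀ p j, 1 ≤ p → p ≤ n → j ≤ p →
      f n p j θ = Lop (Real.exp θ) (n-1) (fun a b => f (n-1) a b θ) p j := by
    intro n hn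
    induction n, hn using Nat.le_induction with
    | base =>
      intro θ p j hpge hpn hjp
      have z1 := Z 1 θ le_rfl
      interval_cases p
      · interval_cases j
        · rw [Lop_lt _ _ _ _ _ (by omega), hp1 2 θ (by omega) 0 (by omega)]
          simp [Finset.Icc_self, z1, h10, h11]
        · rw [Lop_eq _ _ _ _ le_rfl, hp1 2 θ (by omega) 1 (by omega)]
          simp [Finset.Icc_self, z1, h10, h11]
      · interval_cases j
        · rw [Lop_lt _ _ _ _ _ (by omega), hn0 2 θ (by omega)]
          rw [Finset.Icc_eq_empty (by omega)]
          simp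
        · rw [Lop_lt _ _ _ _ _ (by omega), hnj 2 1 θ (by omega) (by omega) (by omega)]
          rw [Finset.Icc_eq_empty (by omega)]
          simp [h10, h11]
        · rw [Lop_eq _ _ _ _ (by omega), hnj 2 2 θ (by omega) (by omega) (by omega)]
          rw [Finset.Icc_eq_empty (by omega)]
          simp [h11]
    | succ n hn ih =>
      intro θ p j hpge hpn hjp
      simp only [Nat.add_sub_cancel]
      have e1 : f (n+1) p j θ = Rop (Real.exp θ) n (fun a b => f n a b θ) p j := by
        have := Req (n+1) θ (by omega) p j hpge hpn hjp
        simpa using this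
      rw [e1]
      have e2 : Rop (Real.exp θ) n (fun a b => f n a b θ) p j
          = Rop (Real.exp θ) n (Lop (Real.exp θ) (n-1) (fun a b => f (n-1) a b θ)) p j := by
        refine Rop_congr _ _ _ _ _ _ (by omega) hjp ?_
        intro a b ha hb
        by_cases ha0 : a = 0
        · subst ha0
          have hb0 : b = 0 := by omega
          subst hb0
          rw [Z n θ (by omega), Lop_zero]
        · exact ih θ a b (by omega) ha hb
      rw [e2]
      have hn1 : n - 1 + 1 = n := by omega
      have e3 : Rop (Real.exp θ) n (Lop (Real.exp θ) (n-1) (fun a b => f (n-1) a b θ)) p j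
          = Lop (Real.exp θ) n (Rop (Real.exp θ) (n-1) (fun a b => f (n-1) a b θ)) p j := by
        have := stmt8_comm (Real.exp θ) (n-1) (fun a b => f (n-1) a b θ) p j hpge hjp
        rw [hn1] at this
        exact this.symm
      rw [e3]
      refine Lop_congr _ _ _ _ _ _ (by omega) hjp ?_
      intro a b ha hb
      by_cases ha0 : a = 0
      · subst ha0
        have hb0 : b = 0 := by omega
        subst hb0
        rw [Rop_zero, Z n θ (by omega)]
      · exact (Req n θ hn a b (by omega) ha hb).symm
  -- the symmetry, by induction
  have Sym : ∀ n : ℕ, 1 ≤ n → ∀ p j : ℕ, ∀ θ : ℝ, 1 ≤ p → p ≤ n → j ≤ p →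
      f n p j θ = Real.exp (n * θ) * f n p (p - j) (-θ) := by
    intro n hn
    induction n, hn using Nat.le_induction with
    | base =>
      intro p j θ hpge hpn hjp
      interval_cases p
      interval_cases j
      · rw [h10, Nat.sub_zero, h11, Nat.cast_one, one_mul, ← Real.exp_add]
        simp
      · rw [h11, Nat.sub_self, h10, mul_one, Nat.cast_one, one_mul]
    | succ n hn ih =>
      intro p j θ hpge hpn hjp
      have hL : f (n+1) p j θ = Lop (Real.exp θ) n (fun a b => f n a b θ) p j := by
        have := Leq (n+1) (by omega) θ p j hpge hpn hjp
        simpa using this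
      have hR : f (n+1) p (p-j) (-θ)
          = Rop (Real.exp (-θ)) n (fun a b => f n a b (-θ)) p (p-j) := by
        have := Req (n+1) (-θ) (by omega) p (p-j) hpge hpn (by omega)
        simpa using this
      rw [hL, hR]
      have ihn : ∀ a b : ℕ, 1 ≤ a → a ≤ n → b ≤ a →
          f n a b (-θ) = Real.exp (n * (-θ)) * f n a (a-b) θ := by
        intro a b h1 h2 h3
        have := ih a b (-θ) h1 h2 h3
        rwa [neg_neg] at this
      by_cases hjpe : j = p
      · subst hjpe
        rw [Nat.sub_self, Lop_eq _ _ _ _ hpge, Rop_j0 _ _ _ _ hpge]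
        have hfirst : f n (j-1) 0 (-θ)
            = Real.exp (n * (-θ)) * f n (j-1) (j-1) θ := by
          by_cases hp1' : j = 1
          · subst hp1'
            simp only [Nat.sub_self]
            rw [Z n (-θ) hn, Z n θ hn, mul_zero]
          · rw [ihn (j-1) 0 (by omega) (by omega) (by omega), Nat.sub_zero]
        have hsum : ∀ k ∈ Icc j n, f n k (k-j+1) (-θ)
            = Real.exp (n * (-θ)) * f n k (j-1) θ := by
          intro k hk
          simp only [mem_Icc] at hk
          rw [ihn k (k-j+1) (by omega) hk.2 (by omega)]
          have hx : k - (k-j+1) = j-1 := by omega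
          rw [hx]
        rw [Finset.sum_congr rfl hsum, ← Finset.mul_sum, hfirst]
        have hexp : Real.exp (↑(n+1) * θ) * Real.exp (n * (-θ)) = Real.exp θ := by
          rw [← Real.exp_add]
          congr 1
          push_cast
          ring
        rw [mul_add, ← mul_assoc, ← mul_assoc, hexp]
      · have hjlt : j < p := lt_of_le_of_ne hjp hjpe
        rw [Lop_lt _ _ _ _ _ hjlt, Rop_pos _ _ _ _ _ hpge (by omega)]
        have hfirst : Real.exp (↑(n+1) * θ) * (Real.exp (-θ) * f n (p-1) (p-j-1) (-θ))
            = f n (p-1) j θ := by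
          by_cases hp1' : p = 1
          · subst hp1'
            have hj0' : j = 0 := by omega
            subst hj0'
            simp only [Nat.sub_self, Nat.sub_zero, Nat.zero_sub]
            rw [Z n (-θ) hn, Z n θ hn, mul_zero, mul_zero]
          · rw [ihn (p-1) (p-j-1) (by omega) (by omega) (by omega)]
            have hx : (p-1) - (p-j-1) = j := by omega
            rw [hx, ← mul_assoc, ← mul_assoc, ← Real.exp_add, ← Real.exp_add]
            have hy : (↑(n+1):ℝ) * θ + -θ + ↑n * (-θ) = 0 := by push_cast; ring
            rw [hy, Real.exp_zero, one_mul]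
        have hsum : ∀ k ∈ Icc p n, f n k (k-p+(p-j)) (-θ)
            = Real.exp (n * (-θ)) * f n k j θ := by
          intro k hk
          simp only [mem_Icc] at hk
          rw [ihn k (k-p+(p-j)) (by omega) hk.2 (by omega)]
          have hx : k - (k-p+(p-j)) = j := by omega
          rw [hx]
        rw [Finset.sum_congr rfl hsum, ← Finset.mul_sum, mul_add, ← mul_assoc _ _ (f n (p-1) (p-j-1) (-θ))]
        rw [mul_assoc (Real.exp (↑(n+1) * θ)) (Real.exp (-θ)), hfirst]
        congr 1
        rw [← mul_assoc, ← Real.exp_add]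
        have hy2 : (↑(n+1):ℝ) * θ + ↑n * (-θ) = θ := by push_cast; ring
        rw [hy2]
  intro n p j θ h1 h2 h3 h4
  exact Sym n h1 p j θ h2 h3 h4
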